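/- For every type-I energy E there exists a constant C = C(E) > 1 such that: (a) for every solution ψ of the eigen-equation H_λψ = Eψ and every n ∈ ℤ, C^{−1}·‖ψ⃗_0‖ ≤ ‖ψ⃗_n‖ ≤ C·‖ψ⃗_0‖; and (b) 1 ≤ ‖T_n(E)‖ ≤ C for every n ∈ ℤ. -/

import Mathlib

noncomputable section

open Filter Topology

namespace TMH

/-- number of ones in the binary expansion of a natural number -/
def onesCount (m : ℕ) : ℕ := (Nat.digits 2 m).sum

/-- The two-sided Thue–Morse potential: `w n = (−1)^{s(n−1)}` for `n ≥ 1`,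
and `w (1−n) = w n` for `n ≥ 1`. -/
def w (n : ℤ) : ℝ :=
  if 1 ≤ n then (-1 : ℝ) ^ onesCount (n - 1).toNat
  else (-1 : ℝ) ^ onesCount (-n).toNat

end TMH
namespace TMH

/-- the one-step transfer matrix `M_n(E)` -/
def M (lam E : ℝ) (n : ℤ) : Matrix (Fin 2) (Fin 2) ℝ := !![E - lam * w n, -1; 1, 0]

/-- `Tpos lam E k = M_k ⋯ M_1` -/
def Tpos (lam E : ℝ) : ℕ → Matrix (Fin 2) (Fin 2) ℝ
  | 0 => 1
  | k + 1 => M lam E (k + 1) * Tpos lam E k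

/-- `Pneg lam E k = M_0 · M_{−1} ⋯ M_{1−k}` -/
def Pneg (lam E : ℝ) : ℕ → Matrix (Fin 2) (Fin 2) ℝ
  | 0 => 1
  | k + 1 => Pneg lam E k * M lam E (-(k : ℤ))

/-- the transfer matrix `T_n(E)` for `n : ℤ`: `T_0 = I`, `T_n = M_n ⋯ M_1` for `n ≥ 1`,
and `T_{−n} = (M_0 M_{−1} ⋯ M_{1−n})⁻¹` for `n ≥ 1`. -/
def T (lam E : ℝ) (n : ℤ) : Matrix (Fin 2) (Fin 2) ℝ :=
  if 0 ≤ n then Tpos lam E n.toNat else (Pneg lam E (-n).toNat)⁻¹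

end TMH
namespace TMH

/-- the pair `(A_n(E), B_n(E))`:  `A_0 = [[E−λ,−1],[1,0]]`, `B_0 = [[E+λ,−1],[1,0]]`,
`A_{n+1} = B_n A_n`, `B_{n+1} = A_n B_n`. -/
def AB (lam E : ℝ) : ℕ → Matrix (Fin 2) (Fin 2) ℝ × Matrix (Fin 2) (Fin 2) ℝ
  | 0 => (!![E - lam, -1; 1, 0], !![E + lam, -1; 1, 0])
  | n + 1 => ((AB lam E n).2 * (AB lam E n).1, (AB lam E n).1 * (AB lam E n).2)

def A (lam E : ℝ) (n : ℕ) : Matrix (Fin 2) (Fin 2) ℝ := (AB lam E n).1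
def B (lam E : ℝ) (n : ℕ) : Matrix (Fin 2) (Fin 2) ℝ := (AB lam E n).2

/-- the trace polynomials `t_n(E) = tr(A_n(E))` -/
def t (lam E : ℝ) (n : ℕ) : ℝ := (A lam E n).trace

/-- the set `Σ_I` of type-I energies -/
def SigmaI (lam : ℝ) : Set ℝ := {E | ∃ k : ℕ, 1 ≤ k ∧ t lam E k = 0}

/-- the set `Σ_II` of type-II energies -/
def SigmaII (lam : ℝ) : Set ℝ :=
  {E | ∃ n₀ : ℕ, ∀ n : ℕ, n₀ ≤ n → |t lam E (2 * n)| ≤ 2 ∧ 2 < |t lam E (2 * n + 1)|}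

/-- the set `Σ_III` of type-III energies -/
def SigmaIII (lam : ℝ) : Set ℝ :=
  {E | ∃ n₀ : ℕ, ∀ n : ℕ, n₀ ≤ n → |t lam E (2 * n + 1)| ≤ 2 ∧ 2 < |t lam E (2 * n)|}

end TMH
namespace TMH

/-- the vector `v_θ = (cos θ, −sin θ)ᵗ` -/
def vec (θ : ℝ) : Fin 2 → ℝ := ![Real.cos θ, -Real.sin θ]

/-- the Euclidean norm on ℝ² -/
def vnorm (v : Fin 2 → ℝ) : ℝ := Real.sqrt (v 0 ^ 2 + v 1 ^ 2)

end TMH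
namespace TMH

/-- the operator norm on 2×2 real matrices induced by the Euclidean norm on ℝ² -/
def opNorm (X : Matrix (Fin 2) (Fin 2) ℝ) : ℝ :=
  ‖(Matrix.toEuclideanCLM (𝕜 := ℝ) (n := Fin 2) X :
      EuclideanSpace ℝ (Fin 2) →L[ℝ] EuclideanSpace ℝ (Fin 2))‖

end TMH
namespace TMH

/-- `ψ : ℤ → ℝ` is a (formal) solution of the eigen-equation `H_λ ψ = E ψ` -/
def IsSol (lam E : ℝ) (ψ : ℤ → ℝ) : Prop :=
  ∀ n : ℤ, ψ (n + 1) + ψ (n - 1) + lam * w n * ψ n = E * ψ n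

/-- the vector `ψ⃗_n = (ψ_{n+1}, ψ_n)ᵗ` -/
def vsol (ψ : ℤ → ℝ) (n : ℤ) : Fin 2 → ℝ := ![ψ (n + 1), ψ n]

end TMH
namespace TMH

open scoped Matrix.Norms.L2Operator

lemma opNorm_eq (X : Matrix (Fin 2) (Fin 2) ℝ) : opNorm X = ‖X‖ := rfl

lemma onesCount_zero : onesCount 0 = 0 := by simp [onesCount]

lemma onesCount_two_mul (j : ℕ) : onesCount (2 * j) = onesCount j := by
  rcases Nat.eq_zero_or_pos j with rfl | hj
  · rfl
  · unfold onesCount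
    rw [Nat.digits_def' (by norm_num : 1 < 2) (by omega)]
    simp [Nat.mul_div_cancel_left, Nat.mul_mod_right]

lemma onesCount_two_mul_add_one (j : ℕ) : onesCount (2 * j + 1) = onesCount j + 1 := by
  unfold onesCount
  rw [Nat.digits_def' (by norm_num : 1 < 2) (by omega)]
  have h1 : (2 * j + 1) % 2 = 1 := by omega
  have h2 : (2 * j + 1) / 2 = j := by omega
  rw [h1, h2]
  simp [Nat.add_comm]

lemma neg_one_pow_onesCount_add : ∀ (N m r : ℕ), r < 2 ^ N →
    ((-1 : ℝ)) ^ onesCount (2 ^ N * m + r) =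
      (-1) ^ onesCount m * (-1) ^ onesCount r := by
  intro N
  induction N with
  | zero => intro m r hr; interval_cases r; simp [onesCount_zero]
  | succ N ih =>
    intro m r hr
    have hpow : 2 ^ (N + 1) = 2 * 2 ^ N := by rw [pow_succ]; ring
    rcases Nat.even_or_odd r with ⟨q, hqe⟩ | ⟨q, hqe⟩
    · have hr2 : r = 2 * q := by omega
      subst hr2
      have h1 : 2 ^ (N + 1) * m + 2 * q = 2 * (2 ^ N * m + q) := by rw [hpow]; ring
      rw [h1, onesCount_two_mul, ih m q (by omega), onesCount_two_mul]
    · subst hqe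
      have h1 : 2 ^ (N + 1) * m + (2 * q + 1) = 2 * (2 ^ N * m + q) + 1 := by rw [hpow]; ring
      rw [h1]
      simp only [onesCount_two_mul_add_one, pow_succ, ih m q (by omega)]
      ring

lemma w_nat (i : ℕ) : w ((i : ℤ) + 1) = (-1 : ℝ) ^ onesCount i := by
  rw [w, if_pos (by omega)]
  norm_num

lemma w_neg (k : ℕ) : w (-(k : ℤ)) = (-1 : ℝ) ^ onesCount k := by
  rw [w, if_neg (by omega)]
  norm_num

lemma M_neg_eq (lam E : ℝ) (k : ℕ) : M lam E (-(k : ℤ)) = M lam E ((k : ℤ) + 1) := by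
  unfold M
  rw [w_neg, w_nat]

lemma sq_eq_neg_one {X : Matrix (Fin 2) (Fin 2) ℝ} (h1 : X.trace = 0) (h2 : X.det = 1) :
    X * X = -1 := by
  rw [Matrix.eta_fin_two X] at h1 h2 ⊢
  rw [Matrix.trace_fin_two_of] at h1
  rw [Matrix.det_fin_two_of] at h2
  rw [Matrix.mul_fin_two]
  ext i j
  fin_cases i <;> fin_cases j <;> simp
  · linear_combination X 0 0 * h1 - h2
  · linear_combination X 0 1 * h1
  · linear_combination X 1 0 * h1
  · linear_combination X 1 1 * h1 - h2

lemma det_A (lam E : ℝ) : ∀ n, (A lam E n).det = 1 ∧ (B lam E n).det = 1 := by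
  intro n
  induction n with
  | zero => constructor <;> simp [A, B, AB, Matrix.det_fin_two_of]
  | succ n ih =>
    constructor <;> simp only [A, B, AB, Matrix.det_mul] <;>
      rw [show (AB lam E n).1 = A lam E n from rfl, show (AB lam E n).2 = B lam E n from rfl,
        ih.1, ih.2] <;> ring

lemma A_succ (lam E : ℝ) (n : ℕ) : A lam E (n + 1) = B lam E n * A lam E n := rfl
lemma B_succ (lam E : ℝ) (n : ℕ) : B lam E (n + 1) = A lam E n * B lam E n := rfl

lemma trace_B_eq (lam E : ℝ) (k : ℕ) (hk : 1 ≤ k) : (B lam E k).trace = (A lam E k).trace := by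
  obtain ⟨m, rfl⟩ : ∃ m, k = m + 1 := ⟨k - 1, by omega⟩
  rw [A_succ, B_succ, Matrix.trace_mul_comm]

lemma AB_eq_one (lam E : ℝ) (k : ℕ) (hk : 1 ≤ k) (ht : t lam E k = 0) :
    A lam E (k + 2) = 1 ∧ B lam E (k + 2) = 1 := by
  have hdet := det_A lam E k
  have hA2 : A lam E k * A lam E k = -1 := sq_eq_neg_one ht hdet.1
  have hB2 : B lam E k * B lam E k = -1 :=
    sq_eq_neg_one (by rw [trace_B_eq lam E k hk]; exact ht) hdet.2
  constructor
  · rw [A_succ, B_succ, A_succ]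
    calc (A lam E k * B lam E k) * (B lam E k * A lam E k)
        = A lam E k * (B lam E k * B lam E k) * A lam E k := by noncomm_ring
      _ = 1 := by rw [hB2]; calc A lam E k * (-1) * A lam E k
            = -(A lam E k * A lam E k) := by noncomm_ring
          _ = 1 := by rw [hA2]; exact neg_neg 1
  · rw [B_succ, A_succ, B_succ]
    calc (B lam E k * A lam E k) * (A lam E k * B lam E k)
        = B lam E k * (A lam E k * A lam E k) * B lam E k := by noncomm_ring
      _ = 1 := by rw [hA2]; calc B lam E k * (-1) * B lam E k
            = -(B lam E k * B lam E k) := by noncomm_ring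
          _ = 1 := by rw [hB2]; exact neg_neg 1

lemma A_neg_lam (lam E : ℝ) : ∀ n, A (-lam) E n = B lam E n ∧ B (-lam) E n = A lam E n := by
  intro n
  induction n with
  | zero =>
    constructor
    · show !![E - -lam, -1; 1, 0] = !![E + lam, -1; 1, 0]
      rw [show E - -lam = E + lam by ring]
    · show !![E + -lam, -1; 1, 0] = !![E - lam, -1; 1, 0]
      rw [show E + -lam = E - lam by ring]
  | succ n ih =>
    exact ⟨by rw [A_succ, B_succ, ih.1, ih.2],
      by rw [B_succ, A_succ, ih.1, ih.2]⟩

lemma Tpos_succ (lam E : ℝ) (k : ℕ) :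
    Tpos lam E (k + 1) = M lam E ((k : ℤ) + 1) * Tpos lam E k := rfl

lemma det_M (lam E : ℝ) (n : ℤ) : (M lam E n).det = 1 := by
  simp [M, Matrix.det_fin_two_of]

lemma det_Tpos (lam E : ℝ) : ∀ k, (Tpos lam E k).det = 1 := by
  intro k
  induction k with
  | zero => simp [Tpos]
  | succ k ih => rw [Tpos_succ, Matrix.det_mul, det_M, ih, one_mul]

lemma M_shift (lam E : ℝ) (N m i : ℕ) (hi : i < 2 ^ N) :
    M lam E ((2 ^ N * m + i : ℕ) + 1) = M ((-1) ^ onesCount m * lam) E ((i : ℤ) + 1) := by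
  have h : lam * w ((2 ^ N * m + i : ℕ) + 1) =
      ((-1) ^ onesCount m * lam) * w ((i : ℤ) + 1) := by
    rw [w_nat, w_nat, neg_one_pow_onesCount_add N m i hi]
    ring
  unfold M
  rw [h]

lemma Tpos_shift (lam E : ℝ) (N m : ℕ) : ∀ r, r ≤ 2 ^ N →
    Tpos lam E (2 ^ N * m + r) =
      Tpos ((-1) ^ onesCount m * lam) E r * Tpos lam E (2 ^ N * m) := by
  intro r
  induction r with
  | zero => simp [Tpos]
  | succ r ih =>
    intro hr
    have h1 : 2 ^ N * m + (r + 1) = (2 ^ N * m + r) + 1 := by omega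
    rw [h1, Tpos_succ, Tpos_succ, ih (by omega), M_shift lam E N m r (by omega), mul_assoc]

lemma Tpos_pow2' (E : ℝ) : ∀ n (lam : ℝ), Tpos lam E (2 ^ n) = A lam E n := by
  intro n
  induction n with
  | zero =>
    intro lam
    show M lam E ((0 : ℤ) + 1) * 1 = _
    rw [mul_one]
    unfold M
    rw [show ((0 : ℤ) + 1) = ((0 : ℕ) : ℤ) + 1 by norm_num, w_nat, onesCount_zero, pow_zero]
    show !![E - lam * 1, -1; 1, 0] = !![E - lam, -1; 1, 0]
    rw [mul_one]
  | succ n ih =>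
    intro lam
    have h1 : 2 ^ (n + 1) = 2 ^ n * 1 + 2 ^ n := by rw [pow_succ]; ring
    have hones : onesCount 1 = 1 := by simp [onesCount]
    rw [h1, Tpos_shift lam E n 1 (2 ^ n) le_rfl, hones, pow_one, mul_one,
      show (-1 : ℝ) * lam = -lam by ring, ih lam, ih (-lam), (A_neg_lam lam E n).1, A_succ]

lemma Tpos_pow2 (lam E : ℝ) (n : ℕ) : Tpos lam E (2 ^ n) = A lam E n := Tpos_pow2' E n lam

lemma Tpos_block (lam E : ℝ) (N : ℕ) (hA : A lam E N = 1) (hB : B lam E N = 1) :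
    ∀ m, Tpos lam E (2 ^ N * m) = 1 := by
  intro m
  induction m with
  | zero => simp [Tpos]
  | succ m ih =>
    have h1 : 2 ^ N * (m + 1) = 2 ^ N * m + 2 ^ N := by ring
    rw [h1, Tpos_shift lam E N m (2 ^ N) le_rfl, ih, mul_one, Tpos_pow2]
    rcases Nat.even_or_odd (onesCount m) with he | ho
    · rw [he.neg_one_pow, one_mul, hA]
    · rw [ho.neg_one_pow, show (-1 : ℝ) * lam = -lam by ring, (A_neg_lam lam E N).1, hB]

open scoped Matrix

/-- reflection matrix -/
def Dm : Matrix (Fin 2) (Fin 2) ℝ := !![1, 0; 0, -1]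

/-- rotation matrix -/
def Rm : Matrix (Fin 2) (Fin 2) ℝ := !![0, -1; 1, 0]

lemma transpose_fin_two (X : Matrix (Fin 2) (Fin 2) ℝ) :
    Xᵀ = !![X 0 0, X 1 0; X 0 1, X 1 1] := by
  ext i j; fin_cases i <;> fin_cases j <;> simp [Matrix.transpose_apply]

lemma DmDm : Dm * Dm = 1 := by
  rw [Dm, Matrix.mul_fin_two, Matrix.one_fin_two]; norm_num

lemma DMD (lam E : ℝ) (n : ℤ) : Dm * (M lam E n)ᵀ * Dm = M lam E n := by
  rw [M, transpose_fin_two, Dm]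
  rw [Matrix.mul_fin_two, Matrix.mul_fin_two]
  norm_num

lemma Pneg_eq (lam E : ℝ) : ∀ k, Pneg lam E k = Dm * (Tpos lam E k)ᵀ * Dm := by
  intro k
  induction k with
  | zero =>
    show (1 : Matrix (Fin 2) (Fin 2) ℝ) = Dm * (1 : Matrix (Fin 2) (Fin 2) ℝ)ᵀ * Dm
    rw [Matrix.transpose_one, mul_one, DmDm]
  | succ k ih =>
    show Pneg lam E k * M lam E (-(k : ℤ)) = Dm * (M lam E ((k : ℤ) + 1) * Tpos lam E k)ᵀ * Dm
    rw [Matrix.transpose_mul, M_neg_eq, ih]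
    calc Dm * (Tpos lam E k)ᵀ * Dm * M lam E ((k : ℤ) + 1)
        = Dm * (Tpos lam E k)ᵀ * Dm * (Dm * (M lam E ((k : ℤ) + 1))ᵀ * Dm) := by
          rw [DMD]
      _ = Dm * (Tpos lam E k)ᵀ * (Dm * Dm) * (M lam E ((k : ℤ) + 1))ᵀ * Dm := by
          noncomm_ring
      _ = Dm * ((Tpos lam E k)ᵀ * (M lam E ((k : ℤ) + 1))ᵀ) * Dm := by
          rw [DmDm, mul_one]; noncomm_ring

lemma det_Dm : Dm.det = -1 := by rw [Dm, Matrix.det_fin_two_of]; norm_num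

lemma det_Pneg (lam E : ℝ) (k : ℕ) : (Pneg lam E k).det = 1 := by
  rw [Pneg_eq]
  simp [Matrix.det_mul, Matrix.det_transpose, det_Tpos, det_Dm]

lemma conjTranspose_eq_transpose (X : Matrix (Fin 2) (Fin 2) ℝ) : Xᴴ = Xᵀ := by
  ext i j
  simp [Matrix.conjTranspose_apply]

lemma norm_transpose (X : Matrix (Fin 2) (Fin 2) ℝ) : ‖Xᵀ‖ = ‖X‖ := by
  rw [← conjTranspose_eq_transpose, Matrix.l2_opNorm_conjTranspose]

lemma norm_one_matrix : ‖(1 : Matrix (Fin 2) (Fin 2) ℝ)‖ = 1 := by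
  rw [Matrix.cstar_norm_def, map_one]
  rw [ContinuousLinearMap.one_def]
  exact ContinuousLinearMap.norm_id

lemma norm_orth {Q : Matrix (Fin 2) (Fin 2) ℝ} (h : Qᵀ * Q = 1) : ‖Q‖ = 1 := by
  have h2 : ‖Qᴴ * Q‖ = ‖Q‖ * ‖Q‖ := Matrix.l2_opNorm_conjTranspose_mul_self Q
  rw [conjTranspose_eq_transpose, h, norm_one_matrix] at h2
  nlinarith [norm_nonneg Q]

lemma norm_Dm : ‖Dm‖ = 1 := by
  apply norm_orth
  rw [Dm, transpose_fin_two]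
  rw [Matrix.one_fin_two]
  norm_num [Matrix.mul_fin_two]

lemma norm_Rm : ‖Rm‖ = 1 := by
  apply norm_orth
  rw [Rm, transpose_fin_two]
  rw [Matrix.one_fin_two]
  norm_num [Matrix.mul_fin_two]

lemma norm_RmT : ‖Rmᵀ‖ = 1 := by rw [norm_transpose, norm_Rm]

lemma adjugate_eq (X : Matrix (Fin 2) (Fin 2) ℝ) : X.adjugate = Rm * Xᵀ * Rmᵀ := by
  rw [Matrix.adjugate_fin_two, transpose_fin_two, Rm, transpose_fin_two]
  rw [Matrix.mul_fin_two, Matrix.mul_fin_two]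
  norm_num

lemma inv_eq_adjugate {X : Matrix (Fin 2) (Fin 2) ℝ} (h : X.det = 1) : X⁻¹ = X.adjugate := by
  rw [Matrix.inv_def, h]
  simp

lemma norm_inv_le {X : Matrix (Fin 2) (Fin 2) ℝ} (h : X.det = 1) : ‖X⁻¹‖ ≤ ‖X‖ := by
  rw [inv_eq_adjugate h, adjugate_eq]
  calc ‖Rm * Xᵀ * Rmᵀ‖ ≤ ‖Rm * Xᵀ‖ * ‖Rmᵀ‖ := norm_mul_le _ _
    _ ≤ ‖Rm‖ * ‖Xᵀ‖ * ‖Rmᵀ‖ := by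
        apply mul_le_mul_of_nonneg_right (norm_mul_le _ _) (norm_nonneg _)
    _ = ‖X‖ := by rw [norm_Rm, norm_RmT, norm_transpose, one_mul, mul_one]

lemma one_le_norm {X : Matrix (Fin 2) (Fin 2) ℝ} (h : X.det = 1) : 1 ≤ ‖X‖ := by
  have hu : IsUnit X.det := by rw [h]; exact isUnit_one
  have h1 : X * X⁻¹ = 1 := Matrix.mul_nonsing_inv X hu
  have h2 : (1 : ℝ) ≤ ‖X‖ * ‖X⁻¹‖ := by
    rw [← norm_one_matrix, ← h1]
    exact norm_mul_le _ _
  have h3 := norm_inv_le h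
  nlinarith [norm_nonneg X, norm_nonneg X⁻¹]

lemma T_natCast (lam E : ℝ) (k : ℕ) : T lam E (k : ℤ) = Tpos lam E k := by
  rw [T, if_pos (by omega)]
  simp

lemma T_neg_natCast (lam E : ℝ) (k : ℕ) (hk : 1 ≤ k) :
    T lam E (-(k : ℤ)) = (Pneg lam E k)⁻¹ := by
  rw [T, if_neg (by omega)]
  simp

lemma det_T (lam E : ℝ) (n : ℤ) : (T lam E n).det = 1 := by
  rw [T]
  split
  · exact det_Tpos lam E _
  · rw [Matrix.det_nonsing_inv, det_Pneg]
    simp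

lemma vnorm_eq (v : Fin 2 → ℝ) :
    vnorm v = ‖(WithLp.equiv 2 (Fin 2 → ℝ)).symm v‖ := by
  rw [vnorm, EuclideanSpace.norm_eq]
  congr 1
  simp [Fin.sum_univ_two, Real.norm_eq_abs, sq_abs]

lemma vnorm_mulVec_le (X : Matrix (Fin 2) (Fin 2) ℝ) (v : Fin 2 → ℝ) :
    vnorm (X.mulVec v) ≤ ‖X‖ * vnorm v := by
  rw [vnorm_eq, vnorm_eq]
  exact X.l2_opNorm_mulVec ((WithLp.equiv 2 (Fin 2 → ℝ)).symm v)

lemma vsol_step {lam E : ℝ} {ψ : ℤ → ℝ} (h : IsSol lam E ψ) (n : ℤ) :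
    vsol ψ n = (M lam E n).mulVec (vsol ψ (n - 1)) := by
  have hn := h n
  funext i
  fin_cases i <;>
    simp [vsol, M, Matrix.mulVec, dotProduct, Fin.sum_univ_two, sub_add_cancel]
  linarith

lemma vsol_pos {lam E : ℝ} {ψ : ℤ → ℝ} (h : IsSol lam E ψ) :
    ∀ k : ℕ, vsol ψ (k : ℤ) = (Tpos lam E k).mulVec (vsol ψ 0) := by
  intro k
  induction k with
  | zero => simp [Tpos, Matrix.one_mulVec]
  | succ k ih =>
    have hstep := vsol_step h ((k : ℤ) + 1)
    have h1 : ((k + 1 : ℕ) : ℤ) = (k : ℤ) + 1 := by push_cast; ring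
    have h2 : (k : ℤ) + 1 - 1 = (k : ℤ) := by ring
    rw [h1, hstep, h2, ih, Matrix.mulVec_mulVec, Tpos_succ]

lemma vsol_negP {lam E : ℝ} {ψ : ℤ → ℝ} (h : IsSol lam E ψ) :
    ∀ k : ℕ, (Pneg lam E k).mulVec (vsol ψ (-(k : ℤ))) = vsol ψ 0 := by
  intro k
  induction k with
  | zero => simp [Pneg, Matrix.one_mulVec]
  | succ k ih =>
    have hstep := vsol_step h (-(k : ℤ))
    have h1 : -((k : ℤ)) - 1 = -((k + 1 : ℕ) : ℤ) := by push_cast; ring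
    rw [h1] at hstep
    show (Pneg lam E k * M lam E (-(k : ℤ))).mulVec (vsol ψ (-((k + 1 : ℕ) : ℤ))) = vsol ψ 0
    rw [← Matrix.mulVec_mulVec, ← hstep, ih]

lemma vsol_T {lam E : ℝ} {ψ : ℤ → ℝ} (h : IsSol lam E ψ) (n : ℤ) :
    vsol ψ n = (T lam E n).mulVec (vsol ψ 0) := by
  obtain ⟨k, rfl | rfl⟩ := n.eq_nat_or_neg
  · rw [T_natCast]
    exact vsol_pos h k
  · rcases Nat.eq_zero_or_pos k with rfl | hk
    · show vsol ψ 0 = (T lam E 0).mulVec (vsol ψ 0)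
      rw [show (0 : ℤ) = ((0 : ℕ) : ℤ) by norm_num, T_natCast]
      simp [Tpos, Matrix.one_mulVec]
    · rw [T_neg_natCast lam E k hk]
      have hP := vsol_negP h k
      have hu : IsUnit (Pneg lam E k).det := by rw [det_Pneg]; exact isUnit_one
      have := congrArg (fun v => (Pneg lam E k)⁻¹.mulVec v) hP
      simpa only [Matrix.mulVec_mulVec, Matrix.nonsing_inv_mul _ hu, Matrix.one_mulVec] using this

lemma norm_Pneg_le (lam E : ℝ) (k : ℕ) : ‖Pneg lam E k‖ ≤ ‖Tpos lam E k‖ := by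
  rw [Pneg_eq]
  calc ‖Dm * (Tpos lam E k)ᵀ * Dm‖ ≤ ‖Dm * (Tpos lam E k)ᵀ‖ * ‖Dm‖ := norm_mul_le _ _
    _ ≤ ‖Dm‖ * ‖(Tpos lam E k)ᵀ‖ * ‖Dm‖ :=
        mul_le_mul_of_nonneg_right (norm_mul_le _ _) (norm_nonneg _)
    _ = ‖Tpos lam E k‖ := by rw [norm_Dm, norm_transpose, one_mul, mul_one]

lemma vnorm_nonneg (v : Fin 2 → ℝ) : 0 ≤ vnorm v := Real.sqrt_nonneg _

/-- **Proposition (type-I energies are extended states).**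
For every type-I energy `E` there is `C = C(E) > 1` such that every formal solution `ψ`
of `H_λψ = Eψ` satisfies `C⁻¹‖ψ⃗_0‖ ≤ ‖ψ⃗_n‖ ≤ C‖ψ⃗_0‖` for all `n ∈ ℤ`, and
`1 ≤ ‖T_n(E)‖ ≤ C` for all `n ∈ ℤ`. -/
theorem typeI_extended (lam : ℝ) (hlam : lam ≠ 0) (E : ℝ) (hE : E ∈ SigmaI lam) :
    ∃ C : ℝ, 1 < C ∧
      (∀ ψ : ℤ → ℝ, IsSol lam E ψ → ∀ n : ℤ,
        C⁻¹ * vnorm (vsol ψ 0) ≤ vnorm (vsol ψ n) ∧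
        vnorm (vsol ψ n) ≤ C * vnorm (vsol ψ 0)) ∧
      (∀ n : ℤ, 1 ≤ opNorm (T lam E n) ∧ opNorm (T lam E n) ≤ C) := by
  obtain ⟨k, hk1, htk⟩ := hE
  set N : ℕ := k + 2 with hN
  obtain ⟨hA, hB⟩ := AB_eq_one lam E k hk1 htk
  have hblock : ∀ m, Tpos lam E (2 ^ N * m) = 1 := Tpos_block lam E N hA hB
  have hne : (Finset.range (2 ^ N)).Nonempty := by
    rw [Finset.nonempty_range_iff]
    positivity
  set C₀ : ℝ := Finset.sup' (Finset.range (2 ^ N)) hne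
    (fun r => max ‖Tpos lam E r‖ ‖Tpos (-lam) E r‖) with hC₀
  have hsup : ∀ r ∈ Finset.range (2 ^ N),
      max ‖Tpos lam E r‖ ‖Tpos (-lam) E r‖ ≤ C₀ := fun r hr =>
    Finset.le_sup' (fun r => max ‖Tpos lam E r‖ ‖Tpos (-lam) E r‖) hr
  have key : ∀ n : ℕ, ‖Tpos lam E n‖ ≤ C₀ := by
    intro n
    have hmod := Nat.div_add_mod n (2 ^ N)
    have hrlt : n % 2 ^ N < 2 ^ N := Nat.mod_lt n (by positivity)
    have hdecomp : Tpos lam E n =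
        Tpos ((-1) ^ onesCount (n / 2 ^ N) * lam) E (n % 2 ^ N) := by
      conv_lhs => rw [← hmod]
      rw [Tpos_shift lam E N (n / 2 ^ N) (n % 2 ^ N) (le_of_lt hrlt), hblock, mul_one]
    have hmem : n % 2 ^ N ∈ Finset.range (2 ^ N) := Finset.mem_range.2 hrlt
    rcases Nat.even_or_odd (onesCount (n / 2 ^ N)) with he | ho
    · rw [hdecomp, he.neg_one_pow, one_mul]
      exact le_trans (le_max_left _ _) (hsup _ hmem)
    · rw [hdecomp, ho.neg_one_pow, show (-1 : ℝ) * lam = -lam by ring]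
      exact le_trans (le_max_right _ _) (hsup _ hmem)
  set C : ℝ := max C₀ 1 + 1 with hC
  have hC1 : 1 < C := by
    have : (1 : ℝ) ≤ max C₀ 1 := le_max_right _ _
    linarith
  have hCpos : 0 < C := by linarith
  have hC₀C : C₀ ≤ C := by
    have : C₀ ≤ max C₀ 1 := le_max_left _ _
    linarith
  have hTle : ∀ n : ℤ, ‖T lam E n‖ ≤ C := by
    intro n
    obtain ⟨j, rfl | rfl⟩ := n.eq_nat_or_neg
    · rw [T_natCast]
      exact le_trans (key j) hC₀C
    · rcases Nat.eq_zero_or_pos j with rfl | hj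
      · show ‖T lam E 0‖ ≤ C
        rw [show (0 : ℤ) = ((0 : ℕ) : ℤ) by norm_num, T_natCast]
        exact le_trans (key 0) hC₀C
      · rw [T_neg_natCast lam E j hj]
        calc ‖(Pneg lam E j)⁻¹‖ ≤ ‖Pneg lam E j‖ := norm_inv_le (det_Pneg lam E j)
          _ ≤ ‖Tpos lam E j‖ := norm_Pneg_le lam E j
          _ ≤ C := le_trans (key j) hC₀C
  have hTinv_le : ∀ n : ℤ, ‖(T lam E n)⁻¹‖ ≤ C := fun n =>
    le_trans (norm_inv_le (det_T lam E n)) (hTle n)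
  refine ⟨C, hC1, ?_, ?_⟩
  · intro ψ hψ n
    have hvT := vsol_T hψ n
    have hupper : vnorm (vsol ψ n) ≤ C * vnorm (vsol ψ 0) := by
      rw [hvT]
      calc vnorm ((T lam E n).mulVec (vsol ψ 0)) ≤ ‖T lam E n‖ * vnorm (vsol ψ 0) :=
            vnorm_mulVec_le _ _
        _ ≤ C * vnorm (vsol ψ 0) :=
            mul_le_mul_of_nonneg_right (hTle n) (vnorm_nonneg _)
    have hu : IsUnit (T lam E n).det := by rw [det_T]; exact isUnit_one
    have h0 : vsol ψ 0 = (T lam E n)⁻¹.mulVec (vsol ψ n) := by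
      rw [hvT, Matrix.mulVec_mulVec, Matrix.nonsing_inv_mul _ hu, Matrix.one_mulVec]
    have hlower : vnorm (vsol ψ 0) ≤ C * vnorm (vsol ψ n) := by
      rw [h0]
      calc vnorm ((T lam E n)⁻¹.mulVec (vsol ψ n)) ≤ ‖(T lam E n)⁻¹‖ * vnorm (vsol ψ n) :=
            vnorm_mulVec_le _ _
        _ ≤ C * vnorm (vsol ψ n) :=
            mul_le_mul_of_nonneg_right (hTinv_le n) (vnorm_nonneg _)
    exact ⟨(inv_mul_le_iff₀ hCpos).2 hlower, hupper⟩
  · intro n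
    rw [opNorm_eq]
    exact ⟨one_le_norm (det_T lam E n), hTle n⟩

end TMH
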